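/- Assume the standing hypotheses, let x ∈ ℕ₀ with x = α·a + β·c for some α, β ∈ ℕ₀ with 0 ≤ α < c, and suppose β < a. Then for every nonnegative integer y with b·x ≤ a·y, the element (x,y) lies in S and all of its factorizations have the same length: if (p,q,r) and (p',q',r') ∈ ℕ₀³ both satisfy p·u + q·v + r·w = (x,y), then p+q+r = p'+q'+r'. In particular ρ((x,y)) = 1. -/
import Mathlib

/-- Key uniqueness: with gcd(a,c)=1 and bounds, representation x = q·a + r·c is unique. -/
lemma embdim3_unique_rep (a b c d : ℕ) (ha : 0 < a) (hc : 0 < c)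
    (hstar : b * c = a * d + 1) (α β : ℕ) (hα : α < c) (hβ : β < a)
    (q r : ℕ) (h : q * a + r * c = α * a + β * c) : q = α ∧ r = β := by
  have hcop : IsCoprime (a : ℤ) (c : ℤ) := ⟨-(d : ℤ), (b : ℤ), by push_cast; nlinarith [hstar]⟩
  have hZ : (a : ℤ) * ((q : ℤ) - α) = (c : ℤ) * ((β : ℤ) - r) := by push_cast at h ⊢; linarith
  have hdvd : (a : ℤ) ∣ ((β : ℤ) - r) := by
    have : (a : ℤ) ∣ (c : ℤ) * ((β : ℤ) - r) := ⟨(q : ℤ) - α, by linarith⟩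
    exact (IsCoprime.dvd_of_dvd_mul_left hcop this)
  obtain ⟨k, hk⟩ := hdvd
  have haZ : (0 : ℤ) < a := by exact_mod_cast ha
  have hq : (q : ℤ) - α = (c : ℤ) * k := by
    have h2 : (a : ℤ) * ((q : ℤ) - α) = (a : ℤ) * ((c : ℤ) * k) := by rw [hZ, hk]; ring
    exact mul_left_cancel₀ (by positivity) h2
  have hk0 : k = 0 := by
    rcases lt_trichotomy k 0 with hlt | he | hgt
    · have h1 : k ≤ -1 := by omega
      have hαZ : (α : ℤ) < c := by exact_mod_cast hα
      have hq0 : (0 : ℤ) ≤ q := Int.natCast_nonneg q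
      nlinarith
    · exact he
    · have h1 : (1 : ℤ) ≤ k := by omega
      have hβZ : (β : ℤ) < a := by exact_mod_cast hβ
      have hr0 : (0 : ℤ) ≤ r := Int.natCast_nonneg r
      nlinarith
  constructor
  · have : (q : ℤ) = α := by rw [hk0] at hq; linarith
    exact_mod_cast this
  · have : (β : ℤ) = r := by rw [hk0] at hk; linarith
    exact_mod_cast this.symm

/-- Standing hypotheses; fix x = α·a + β·c with 0 ≤ α < c and β < a.  Then for
every y with b·x ≤ a·y, the element (x,y) lies in S and all of its
factorizations have the same length; in particular ρ((x,y)) = 1. -/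
theorem embdim3_elasticity_one_of_small_beta (a b c d : ℕ) (ha : 0 < a)
    (hb : 0 < b) (hc : 0 < c) (hstar : b * c = a * d + 1)
    (x α β : ℕ) (hx : x = α * a + β * c) (hα : α < c) (hβ : β < a) :
    ∀ y : ℕ, b * x ≤ a * y →
      (x, y) ∈ AddSubmonoid.closure
          ({((0 : ℕ), (1 : ℕ)), (a, b), (c, d)} : Set (ℕ × ℕ)) ∧
        ∀ p q r p' q' r' : ℕ,
          p • ((0 : ℕ), (1 : ℕ)) + q • ((a, b) : ℕ × ℕ) + r • ((c, d) : ℕ × ℕ) = (x, y) →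
          p' • ((0 : ℕ), (1 : ℕ)) + q' • ((a, b) : ℕ × ℕ) + r' • ((c, d) : ℕ × ℕ) = (x, y) →
            p + q + r = p' + q' + r' := by
  intro y hy
  -- y ≥ α*b + β*d
  have hle : α * b + β * d ≤ y := by
    have h1 : a * (α * b + β * d) + β = b * x := by subst hx; nlinarith [hstar]
    nlinarith
  constructor
  · -- membership via the factorization ((y - (α*b+β*d)), α, β)
    have heq : (y - (α * b + β * d)) • ((0 : ℕ), (1 : ℕ)) + α • ((a, b) : ℕ × ℕ)
        + β • ((c, d) : ℕ × ℕ) = (x, y) := by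
      simp only [Prod.smul_mk, smul_eq_mul, Prod.mk_add_mk, Prod.mk.injEq]
      omega
    rw [← heq]
    have h1 : ((0 : ℕ), (1 : ℕ)) ∈ AddSubmonoid.closure
        ({((0 : ℕ), (1 : ℕ)), (a, b), (c, d)} : Set (ℕ × ℕ)) :=
      AddSubmonoid.subset_closure (by simp)
    have h2 : ((a, b) : ℕ × ℕ) ∈ AddSubmonoid.closure
        ({((0 : ℕ), (1 : ℕ)), (a, b), (c, d)} : Set (ℕ × ℕ)) :=
      AddSubmonoid.subset_closure (by simp)
    have h3 : ((c, d) : ℕ × ℕ) ∈ AddSubmonoid.closure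
        ({((0 : ℕ), (1 : ℕ)), (a, b), (c, d)} : Set (ℕ × ℕ)) :=
      AddSubmonoid.subset_closure (by simp)
    exact AddSubmonoid.add_mem _ (AddSubmonoid.add_mem _ (AddSubmonoid.nsmul_mem _ h1 _)
      (AddSubmonoid.nsmul_mem _ h2 _)) (AddSubmonoid.nsmul_mem _ h3 _)
  · intro p q r p' q' r' h h'
    simp only [Prod.smul_mk, smul_eq_mul, Prod.mk_add_mk, Prod.mk.injEq] at h h'
    obtain ⟨h1, h2⟩ := h
    obtain ⟨h1', h2'⟩ := h'
    have e1 : q * a + r * c = α * a + β * c := by omega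
    have e1' : q' * a + r' * c = α * a + β * c := by omega
    obtain ⟨hq, hr⟩ := embdim3_unique_rep a b c d ha hc hstar α β hα hβ q r e1
    obtain ⟨hq', hr'⟩ := embdim3_unique_rep a b c d ha hc hstar α β hα hβ q' r' e1'
    subst hq hr hq' hr'
    omega
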